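/- For all t > 0, |s(t)| ≤ 1/2, where s(t) = t·g'(t)/g(t) and g(t) = (1/2)·(1 + 2t/sinh(2t)). -/

import Mathlib

private lemma exp_lb7 (x : ℝ) (hx : 0 ≤ x) :
    1 + x + x^2/2 + x^3/6 + x^4/24 + x^5/120 + x^6/720 + x^7/5040 ≤ Real.exp x := by
  have h := Real.sum_le_exp_of_nonneg hx 8
  simp [Finset.sum_range_succ, Nat.factorial] at h
  linarith [h]

private lemma exp_lb3 (x : ℝ) (hx : 0 ≤ x) : 1 + x + x^2/2 + x^3/6 ≤ Real.exp x := by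
  have h := Real.sum_le_exp_of_nonneg hx 4
  simp [Finset.sum_range_succ, Nat.factorial] at h
  linarith [h]

private lemma exp_ub (x : ℝ) (hx : 0 ≤ x) (hx1 : x ≤ 1) :
    Real.exp x ≤ 1 + x + x^2/2 + x^3/6 + x^4*5/96 := by
  have h := Real.exp_bound' hx hx1 (n := 4) (by norm_num)
  simp [Finset.sum_range_succ, Nat.factorial] at h
  linarith [h]

/-- univariate polynomial bound for `x ≥ 1` -/
private lemma polyL1 (x : ℝ) (hx : 1 ≤ x) :
    10 ≤ (1 + x + x^2/2 + x^3/6 + x^4/24 + x^5/120 + x^6/720 + x^7/5040)^2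
      + (6*x - 4*x^2) * (1 + x + x^2/2 + x^3/6 + x^4/24 + x^5/120 + x^6/720 + x^7/5040) := by
  rcases le_or_gt x 2 with h2 | h2
  · have hy : (0:ℝ) ≤ x - 1 := by linarith
    have hz : (0:ℝ) ≤ 2 - x := by linarith
    nlinarith [mul_nonneg (pow_nonneg hy 1) (pow_nonneg hz 13), mul_nonneg (pow_nonneg hy 2) (pow_nonneg hz 12), mul_nonneg (pow_nonneg hy 3) (pow_nonneg hz 11), mul_nonneg (pow_nonneg hy 4) (pow_nonneg hz 10), mul_nonneg (pow_nonneg hy 5) (pow_nonneg hz 9), mul_nonneg (pow_nonneg hy 6) (pow_nonneg hz 8), mul_nonneg (pow_nonneg hy 7) (pow_nonneg hz 7), mul_nonneg (pow_nonneg hy 8) (pow_nonneg hz 6), mul_nonneg (pow_nonneg hy 9) (pow_nonneg hz 5), mul_nonneg (pow_nonneg hy 10) (pow_nonneg hz 4), mul_nonneg (pow_nonneg hy 11) (pow_nonneg hz 3), mul_nonneg (pow_nonneg hy 12) (pow_nonneg hz 2), mul_nonneg (pow_nonneg hy 13) (pow_nonneg hz 1), pow_nonneg hy 14, pow_nonneg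 hz 14]
  · rcases le_or_gt x 3 with h3 | h3
    · have hy : (0:ℝ) ≤ x - 2 := by linarith
      have hz : (0:ℝ) ≤ 3 - x := by linarith
      nlinarith [mul_nonneg (pow_nonneg hy 1) (pow_nonneg hz 13), mul_nonneg (pow_nonneg hy 2) (pow_nonneg hz 12), mul_nonneg (pow_nonneg hy 3) (pow_nonneg hz 11), mul_nonneg (pow_nonneg hy 4) (pow_nonneg hz 10), mul_nonneg (pow_nonneg hy 5) (pow_nonneg hz 9), mul_nonneg (pow_nonneg hy 6) (pow_nonneg hz 8), mul_nonneg (pow_nonneg hy 7) (pow_nonneg hz 7), mul_nonneg (pow_nonneg hy 8) (pow_nonneg hz 6), mul_nonneg (pow_nonneg hy 9) (pow_nonneg hz 5), mul_nonneg (pow_nonneg hy 10) (pow_nonneg hz 4), mul_nonneg (pow_nonneg hy 11) (pow_nonneg hz 3), mul_nonneg (pow_nonneg hy 12) (pow_nonneg hz 2), mul_nonneg (pow_nonneg hy 13) (pow_nonneg hz 1), pow_nonneg hy 14, pow_nonneg hz 14]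
    · have hy : (0:ℝ) ≤ x - 3 := by linarith
      nlinarith [pow_nonneg hy 1, pow_nonneg hy 2, pow_nonneg hy 3, pow_nonneg hy 4, pow_nonneg hy 5, pow_nonneg hy 6, pow_nonneg hy 7, pow_nonneg hy 8, pow_nonneg hy 9, pow_nonneg hy 10, pow_nonneg hy 11, pow_nonneg hy 12, pow_nonneg hy 13, pow_nonneg hy 14]

/-- the key inequality in exponential form -/
private lemma keyExp (x u v : ℝ) (hx : 0 < x) (hv : 0 < v) (huv : u*v = 1)
    (hu7 : 1 + x + x^2/2 + x^3/6 + x^4/24 + x^5/120 + x^6/720 + x^7/5040 ≤ u)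
    (hu3 : 1 + x + x^2/2 + x^3/6 ≤ u)
    (huup : x ≤ 1 → u ≤ 1 + x + x^2/2 + x^3/6 + x^4*5/96) :
    4*x^2*(u+v) ≤ (u-v)^2 + 6*x*(u-v) := by
  rcases le_or_gt x 1 with hx1 | hx1
  · have huu := huup hx1
    have hE3 : (0:ℝ) < 1 + x + x^2/2 + x^3/6 := by positivity
    have hv2 : v ≤ 1 - x + x^2/2 := by
      rw [← mul_le_mul_iff_left₀ hE3]
      calc v * (1 + x + x^2/2 + x^3/6) ≤ v * u := mul_le_mul_of_nonneg_left hu3 hv.le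
        _ = 1 := by rw [mul_comm]; exact huv
        _ ≤ (1 - x + x^2/2) * (1 + x + x^2/2 + x^3/6) := by
            nlinarith [pow_nonneg hx.le 3, pow_nonneg hx.le 4, pow_nonneg hx.le 5,
              mul_nonneg (pow_nonneg hx.le 3) (by linarith : (0:ℝ) ≤ 1 - x)]
    nlinarith [huv, hu3, huu, hv2, hx, hx1, mul_pos hx hx, sq_nonneg (u-v),
      mul_nonneg (mul_nonneg hx.le hx.le) (sub_nonneg.2 hx1), pow_nonneg hx.le 4,
      pow_nonneg hx.le 5, pow_nonneg hx.le 6]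
  · have hx1' : (1:ℝ) ≤ x := hx1.le
    have hx3 : (0:ℝ) ≤ x^3 := by positivity
    have hx4 : (0:ℝ) ≤ x^4 := by positivity
    have hx5 : (0:ℝ) ≤ x^5 := by positivity
    have hx6 : (0:ℝ) ≤ x^6 := by positivity
    have hx7 : (0:ℝ) ≤ x^7 := by positivity
    have hL1 := polyL1 x hx1'
    have hfac : 0 ≤ u + (1 + x + x^2/2 + x^3/6 + x^4/24 + x^5/120 + x^6/720 + x^7/5040) + 6*x - 4*x^2 := by
      nlinarith [sq_nonneg (x-4), mul_nonneg (mul_nonneg hx4 hx.le) (sq_nonneg (x-3)), hx5, hx6, hx7]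
    have hA : 0 ≤ (u - (1 + x + x^2/2 + x^3/6 + x^4/24 + x^5/120 + x^6/720 + x^7/5040)) * (u + (1 + x + x^2/2 + x^3/6 + x^4/24 + x^5/120 + x^6/720 + x^7/5040) + 6*x - 4*x^2) :=
      mul_nonneg (by linarith) hfac
    have hE2v : v * (1 + x + x^2/2) ≤ 1 := by
      calc v * (1 + x + x^2/2) ≤ v * u := mul_le_mul_of_nonneg_left (by linarith) hv.le
        _ = 1 := by rw [mul_comm]; exact huv
    have hBv : 0 ≤ v * (8 + 2*x) := mul_nonneg hv.le (by linarith)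
    nlinarith [hA, hL1, hE2v, hBv, sq_nonneg v, huv]

/-- the key inequality: `sinh² x + 3x sinh x ≥ 2x² cosh x` for `x > 0` -/
private lemma keyIneq (x : ℝ) (hx : 0 < x) :
    2*x^2*Real.cosh x ≤ Real.sinh x ^ 2 + 3*x*Real.sinh x := by
  have huv : Real.exp x * Real.exp (-x) = 1 := by
    rw [← Real.exp_add]; simp
  have h := keyExp x (Real.exp x) (Real.exp (-x)) hx (Real.exp_pos _) huv
    (exp_lb7 x hx.le) (exp_lb3 x hx.le) (fun h1 => exp_ub x hx.le h1)
  rw [Real.sinh_eq, Real.cosh_eq]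
  nlinarith [h]

/-- `sinh x ≤ x cosh x` for `x > 0` -/
private lemma sinh_le_mul_cosh (x : ℝ) (hx : 0 < x) : Real.sinh x ≤ x * Real.cosh x := by
  have huv : Real.exp x * Real.exp (-x) = 1 := by
    rw [← Real.exp_add]; simp
  have hv : 0 < Real.exp (-x) := Real.exp_pos _
  have hu : 0 < Real.exp x := Real.exp_pos _
  rw [Real.sinh_eq, Real.cosh_eq]
  rcases le_or_gt x 1 with hx1 | hx1
  · have huu := exp_ub x hx.le hx1
    have hu3 := exp_lb3 x hx.le
    set u := Real.exp x
    set v := Real.exp (-x)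
    have hT3 : (0:ℝ) ≤ 1 - x + x^2/2 - x^3/6 := by nlinarith [pow_nonneg hx.le 3, sq_nonneg (1-x)]
    have hv3 : 1 - x + x^2/2 - x^3/6 ≤ v := by
      rw [← mul_le_mul_iff_left₀ hu]
      calc (1 - x + x^2/2 - x^3/6) * u ≤ (1 - x + x^2/2 - x^3/6) * (1 + x + x^2/2 + x^3/6 + x^4*5/96) :=
            mul_le_mul_of_nonneg_left huu hT3
        _ ≤ 1 := by nlinarith [pow_nonneg hx.le 4, pow_nonneg hx.le 5, pow_nonneg hx.le 6, pow_nonneg hx.le 7, mul_nonneg (pow_nonneg hx.le 4) (sub_nonneg.2 hx1)]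
        _ = v * u := huv.symm ▸ by rw [mul_comm]
    nlinarith [hv3, huu, hx, hx1, pow_nonneg hx.le 3, pow_nonneg hx.le 4, pow_nonneg hx.le 5, mul_nonneg (pow_nonneg hx.le 3) (sub_nonneg.2 hx1)]
  · nlinarith [hu, hv, hx1]

/-- The shoaling factor `g(t) = (1/2)·(1 + 2t/sinh(2t))`. -/
noncomputable def gFun (t : ℝ) : ℝ := (1 / 2) * (1 + 2 * t / Real.sinh (2 * t))

/-- `|s(t)| ≤ 1/2` for all `t > 0`, where `s(t) = t·g'(t)/g(t)`. -/
theorem sFun_bound (t : ℝ) (ht : 0 < t) :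
    |t * deriv gFun t / gFun t| ≤ 1 / 2 := by
  have hderiv : deriv gFun t = (1/2) * ((2 * Real.sinh (2*t) - 2*t*(Real.cosh (2*t)*2)) / (Real.sinh (2*t))^2) := by
    have h2t : HasDerivAt (fun t : ℝ => 2*t) 2 t := by
      simpa using (hasDerivAt_id t).const_mul (2:ℝ)
    have hs : HasDerivAt (fun t : ℝ => Real.sinh (2*t)) (Real.cosh (2*t) * 2) t :=
      (Real.hasDerivAt_sinh (2*t)).comp t h2t
    have hsne : Real.sinh (2*t) ≠ 0 := ne_of_gt (Real.sinh_pos_iff.2 (by linarith))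
    have hdiv := h2t.div hs hsne
    have hg : HasDerivAt gFun ((1/2) * ((2 * Real.sinh (2*t) - 2*t*(Real.cosh (2*t)*2)) / (Real.sinh (2*t))^2)) t := by
      have := (hdiv.const_add (1:ℝ)).const_mul (1/2 : ℝ)
      unfold gFun
      simpa using this
    exact hg.deriv
  have key := keyIneq (2*t) (by linarith)
  have hle := sinh_le_mul_cosh (2*t) (by linarith)
  set S := Real.sinh (2*t) with hSdef
  set C := Real.cosh (2*t) with hCdef
  have hS : 0 < S := Real.sinh_pos_iff.2 (by linarith)
  have hgval : gFun t = (S + 2*t)/(2*S) := by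
    unfold gFun
    rw [← hSdef]
    field_simp
  have hD : 0 < S*(S+2*t) := mul_pos hS (by linarith)
  have hexpr : t * deriv gFun t / gFun t = 2*t*(S - 2*t*C)/(S*(S+2*t)) := by
    rw [hderiv, hgval]
    field_simp
  rw [hexpr, abs_le]
  constructor
  · rw [le_div_iff₀ hD]
    nlinarith [key]
  · rw [div_le_iff₀ hD]
    nlinarith [hle, hS, ht]
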